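/- Let u ∈ R^P be a sparse vector with ||u||_0 ≤ s*, and let Π_s denote the hard thresholding operator which keeps the top-s entries of a vector in absolute value and sets the rest to zero. If s > s*, then for any v ∈ R^P, ||Π_s(v) - u||_2^2 ≤ (1 + 2√(s*)/√(s - s*)) ||v - u||_2^2. -/

import Mathlib

private lemma aux_arith (K N Sr α2 β2 : ℝ) (hK : 1 ≤ K) (hN : 1 ≤ N) (hKS : K ≤ Sr)
    (hα : 0 ≤ α2) (hβ : 0 ≤ β2) :
    K * (β2 / (N + K)) + 2 * (Real.sqrt (β2 / (N + K)) * Real.sqrt (K * α2))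
      ≤ 2 * Real.sqrt Sr / Real.sqrt N * (α2 + β2) := by
  have hNK : 0 < N + K := by linarith
  set c := Real.sqrt (K / (N + K)) with hc
  have hc0 : 0 ≤ c := Real.sqrt_nonneg _
  have hc2 : c ^ 2 = K / (N + K) := Real.sq_sqrt (by positivity)
  have hc1 : c ≤ 1 := by
    rw [hc, show (1 : ℝ) = Real.sqrt 1 by simp]
    apply Real.sqrt_le_sqrt
    rw [div_le_one hNK]; linarith
  have h1 : K * (β2 / (N + K)) ≤ c * β2 := by
    have he : K * (β2 / (N + K)) = c ^ 2 * β2 := by rw [hc2]; ring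
    rw [he]
    nlinarith [mul_nonneg (mul_nonneg hc0 (by linarith : (0:ℝ) ≤ 1 - c)) hβ]
  have h2 : Real.sqrt (β2 / (N + K)) * Real.sqrt (K * α2)
      = c * (Real.sqrt α2 * Real.sqrt β2) := by
    rw [hc, ← Real.sqrt_mul (by positivity), ← Real.sqrt_mul (by positivity),
      ← Real.sqrt_mul (by positivity)]
    congr 1
    field_simp
  have hamgm : 2 * (Real.sqrt α2 * Real.sqrt β2) ≤ α2 + β2 := by
    nlinarith [sq_nonneg (Real.sqrt α2 - Real.sqrt β2), Real.sq_sqrt hα, Real.sq_sqrt hβ]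
  have hcr : c ≤ Real.sqrt Sr / Real.sqrt N := by
    rw [hc, Real.sqrt_div (by linarith : (0:ℝ) ≤ K)]
    apply div_le_div₀ (Real.sqrt_nonneg Sr) (Real.sqrt_le_sqrt hKS)
      (Real.sqrt_pos.mpr (by linarith)) (Real.sqrt_le_sqrt (by linarith))
  have hr0 : 0 ≤ Real.sqrt Sr / Real.sqrt N := by positivity
  calc K * (β2 / (N + K)) + 2 * (Real.sqrt (β2 / (N + K)) * Real.sqrt (K * α2))
      ≤ c * β2 + c * (α2 + β2) := by rw [h2]; nlinarith
    _ ≤ 2 * c * (α2 + β2) := by nlinarith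
    _ ≤ 2 * (Real.sqrt Sr / Real.sqrt N) * (α2 + β2) := by nlinarith
    _ = 2 * Real.sqrt Sr / Real.sqrt N * (α2 + β2) := by ring

theorem stmt_1 {P : ℕ} (u v : EuclideanSpace ℝ (Fin P)) (s sstar : ℕ)
    (hsparse : (Finset.univ.filter fun i => u i ≠ 0).card ≤ sstar)
    (hs : sstar < s)
    (T : Finset (Fin P)) (hTcard : T.card = min s P)
    (hTtop : ∀ i ∈ T, ∀ j ∉ T, |v j| ≤ |v i|) :
    ‖(show EuclideanSpace ℝ (Fin P) from WithLp.toLp 2 (fun i => if i ∈ T then v i else 0)) - u‖ ^ 2 ≤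
      (1 + 2 * Real.sqrt sstar / Real.sqrt (s - sstar : ℕ)) * ‖v - u‖ ^ 2 := by
  classical
  set w : EuclideanSpace ℝ (Fin P) := WithLp.toLp 2 (fun i => if i ∈ T then v i else 0) with hwdef
  set S : Finset (Fin P) := Finset.univ.filter (fun i => u i ≠ 0) with hSdef
  set A : Finset (Fin P) := S \ T with hAdef
  set n : ℕ := s - sstar with hndef
  have hn1 : 1 ≤ n := by omega
  have hnorm : ∀ x : EuclideanSpace ℝ (Fin P), ‖x‖ ^ 2 = ∑ i, (x i) ^ 2 := by
    intro x
    rw [EuclideanSpace.norm_eq, Real.sq_sqrt (by positivity)]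
    simp [Real.norm_eq_abs, sq_abs]
  have hwu : ‖w - u‖ ^ 2 = ∑ i ∈ T, (v i - u i) ^ 2 + ∑ i ∈ Tᶜ, (u i) ^ 2 := by
    rw [hnorm, ← Finset.sum_add_sum_compl T]
    congr 1
    · refine Finset.sum_congr rfl fun i hi => ?_
      simp [hwdef, hi]
    · refine Finset.sum_congr rfl fun i hi => ?_
      have hi' : i ∉ T := by simpa using hi
      simp only [PiLp.sub_apply, hwdef, if_neg hi']
      ring
  have hvu : ‖v - u‖ ^ 2 = ∑ i ∈ T, (v i - u i) ^ 2 + ∑ i ∈ Tᶜ, (v i - u i) ^ 2 := by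
    rw [hnorm, ← Finset.sum_add_sum_compl T]
    simp [PiLp.sub_apply]
  have hAsub : A ⊆ Tᶜ := fun i hi => by
    simp only [Finset.mem_compl]
    exact (Finset.mem_sdiff.mp hi).2
  have huz : ∀ i, i ∉ S → u i = 0 := by
    intro i hi
    by_contra h
    exact hi (by simp [hSdef, h])
  have hsplit : ‖w - u‖ ^ 2 ≤ ‖v - u‖ ^ 2 + ∑ i ∈ A, ((u i) ^ 2 - (v i - u i) ^ 2) := by
    rw [hwu, hvu]
    have h1 : ∑ i ∈ Tᶜ, (u i) ^ 2
        = ∑ i ∈ Tᶜ, (v i - u i) ^ 2 + ∑ i ∈ Tᶜ, ((u i) ^ 2 - (v i - u i) ^ 2) := by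
      rw [← Finset.sum_add_distrib]
      refine Finset.sum_congr rfl fun i _ => by ring
    rw [h1]
    have h2 : ∑ i ∈ Tᶜ, ((u i) ^ 2 - (v i - u i) ^ 2)
        = ∑ i ∈ Tᶜ \ A, ((u i) ^ 2 - (v i - u i) ^ 2)
          + ∑ i ∈ A, ((u i) ^ 2 - (v i - u i) ^ 2) := (Finset.sum_sdiff hAsub).symm
    have h3 : ∑ i ∈ Tᶜ \ A, ((u i) ^ 2 - (v i - u i) ^ 2) ≤ 0 := by
      apply Finset.sum_nonpos
      intro i hi
      have hiT : i ∉ T := by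
        have := (Finset.mem_sdiff.mp hi).1; simpa using this
      have hiA : i ∉ A := (Finset.mem_sdiff.mp hi).2
      have hiS : i ∉ S := fun hiS => hiA (Finset.mem_sdiff.mpr ⟨hiS, hiT⟩)
      rw [huz i hiS]
      nlinarith [sq_nonneg (v i)]
    linarith
  have hE2 : (0:ℝ) ≤ ‖v - u‖ ^ 2 := sq_nonneg _
  have hr0 : (0:ℝ) ≤ 2 * Real.sqrt sstar / Real.sqrt n := by positivity
  have key : ∑ i ∈ A, ((u i) ^ 2 - (v i - u i) ^ 2)
      ≤ 2 * Real.sqrt sstar / Real.sqrt n * ‖v - u‖ ^ 2 := by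
    rcases Finset.eq_empty_or_nonempty A with hA | hA
    · rw [hA, Finset.sum_empty]
      positivity
    -- nonempty case
    set k : ℕ := A.card with hkdef
    have hk1 : 1 ≤ k := Finset.card_pos.mpr hA
    have hsP : s ≤ P := by
      by_contra h
      have : T.card = Fintype.card (Fin P) := by
        rw [hTcard]; simp; omega
      have hTuniv : T = Finset.univ := Finset.eq_univ_of_card T this
      obtain ⟨i, hi⟩ := hA
      have := (Finset.mem_sdiff.mp hi).2
      exact this (hTuniv ▸ Finset.mem_univ i)
    have hTs : T.card = s := by rw [hTcard]; omega
    set m : ℕ := (T \ S).card with hmdef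
    have hm : n + k ≤ m := by
      have h1 : (S ∩ T).card + A.card = S.card := by
        rw [hAdef]; exact Finset.card_inter_add_card_sdiff S T
      have h2 : (T ∩ S).card + m = T.card := by
        rw [hmdef]; exact Finset.card_inter_add_card_sdiff T S
      have h3 : (S ∩ T).card = (T ∩ S).card := by rw [Finset.inter_comm]
      have h4 : S.card ≤ sstar := hsparse
      have h5 : n = s - sstar := hndef
      have h6 : k = A.card := hkdef
      omega
    set α2 : ℝ := ∑ i ∈ A, (v i - u i) ^ 2 with hα2def
    set β2 : ℝ := ∑ j ∈ T \ S, (v j) ^ 2 with hβ2def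
    have hα2 : (0:ℝ) ≤ α2 := Finset.sum_nonneg fun _ _ => sq_nonneg _
    have hβ2 : (0:ℝ) ≤ β2 := Finset.sum_nonneg fun _ _ => sq_nonneg _
    have hnk : (0:ℝ) < (n:ℝ) + (k:ℝ) := by
      have h1 : (1:ℝ) ≤ (n:ℝ) := by exact_mod_cast hn1
      have h2 : (0:ℝ) ≤ (k:ℝ) := Nat.cast_nonneg _
      linarith
    -- pointwise bound
    have hpt : ∀ i ∈ A, (v i) ^ 2 ≤ β2 / ((n:ℝ) + k) := by
      intro i hi
      have hiT : i ∉ T := (Finset.mem_sdiff.mp hi).2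
      have hb : ∀ j ∈ T \ S, (v i) ^ 2 ≤ (v j) ^ 2 := by
        intro j hj
        have h := hTtop j (Finset.mem_sdiff.mp hj).1 i hiT
        nlinarith [abs_nonneg (v i), abs_nonneg (v j), sq_abs (v i), sq_abs (v j)]
      have hsum : (m:ℝ) * (v i) ^ 2 ≤ β2 := by
        have := Finset.card_nsmul_le_sum (T \ S) (fun j => (v j) ^ 2) ((v i) ^ 2) hb
        simpa [nsmul_eq_mul, hβ2def] using this
      rw [le_div_iff₀ hnk]
      have : ((n:ℝ) + k) * (v i) ^ 2 ≤ (m:ℝ) * (v i) ^ 2 := by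
        have : ((n:ℝ) + k) ≤ (m:ℝ) := by exact_mod_cast hm
        nlinarith [sq_nonneg (v i)]
      linarith
    have habs : ∀ i ∈ A, |v i| ≤ Real.sqrt (β2 / ((n:ℝ) + k)) := by
      intro i hi
      rw [← Real.sqrt_sq_eq_abs]
      exact Real.sqrt_le_sqrt (hpt i hi)
    -- sum of v^2 over A
    have hsumv : ∑ i ∈ A, (v i) ^ 2 ≤ (k:ℝ) * (β2 / ((n:ℝ) + k)) := by
      have := Finset.sum_le_card_nsmul A (fun i => (v i) ^ 2) (β2 / ((n:ℝ) + k)) hpt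
      simpa [nsmul_eq_mul, hkdef] using this
    -- Cauchy-Schwarz for cross term
    have hcs : ∑ i ∈ A, |v i - u i| ≤ Real.sqrt ((k:ℝ) * α2) := by
      have h1 : (∑ i ∈ A, |v i - u i|) ^ 2 ≤ (k:ℝ) * α2 := by
        have := sq_sum_le_card_mul_sum_sq (s := A) (f := fun i => |v i - u i|)
        simpa [sq_abs, hα2def, hkdef] using this
      have h2 : (0:ℝ) ≤ ∑ i ∈ A, |v i - u i| :=
        Finset.sum_nonneg fun _ _ => abs_nonneg _
      linarith [Real.sqrt_le_sqrt h1, Real.sqrt_sq h2]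
    have hcross : ∑ i ∈ A, |v i| * |v i - u i|
        ≤ Real.sqrt (β2 / ((n:ℝ) + k)) * Real.sqrt ((k:ℝ) * α2) := by
      calc ∑ i ∈ A, |v i| * |v i - u i|
          ≤ ∑ i ∈ A, Real.sqrt (β2 / ((n:ℝ) + k)) * |v i - u i| := by
            refine Finset.sum_le_sum fun i hi => ?_
            exact mul_le_mul_of_nonneg_right (habs i hi) (abs_nonneg _)
        _ = Real.sqrt (β2 / ((n:ℝ) + k)) * ∑ i ∈ A, |v i - u i| := by
            rw [Finset.mul_sum]
        _ ≤ Real.sqrt (β2 / ((n:ℝ) + k)) * Real.sqrt ((k:ℝ) * α2) :=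
            mul_le_mul_of_nonneg_left hcs (Real.sqrt_nonneg _)
    -- per-term bound and assembly
    have hterm : ∑ i ∈ A, ((u i) ^ 2 - (v i - u i) ^ 2)
        ≤ ∑ i ∈ A, (v i) ^ 2 + 2 * ∑ i ∈ A, |v i| * |v i - u i| := by
      rw [Finset.mul_sum, ← Finset.sum_add_distrib]
      refine Finset.sum_le_sum fun i _ => ?_
      have h1 : (u i) ^ 2 - (v i - u i) ^ 2 = (v i) ^ 2 - 2 * (v i * (v i - u i)) := by ring
      have h2 : -(|v i| * |v i - u i|) ≤ v i * (v i - u i) := by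
        rw [← abs_mul]; exact neg_abs_le _
      linarith
    have hab : α2 + β2 ≤ ‖v - u‖ ^ 2 := by
      rw [hnorm]
      have hdisj : Disjoint A (T \ S) := by
        rw [Finset.disjoint_left]
        intro i hi hj
        exact (Finset.mem_sdiff.mp hi).2 (Finset.mem_sdiff.mp hj).1
      have hβ2' : β2 = ∑ j ∈ T \ S, (v j - u j) ^ 2 := by
        refine Finset.sum_congr rfl fun j hj => ?_
        rw [huz j (Finset.mem_sdiff.mp hj).2]; ring
      rw [hβ2']
      rw [hα2def, ← Finset.sum_union hdisj]
      have := Finset.sum_le_sum_of_subset_of_nonneg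
        (Finset.subset_univ (A ∪ (T \ S))) (f := fun i => (v i - u i) ^ 2)
        (fun i _ _ => sq_nonneg _)
      simpa [PiLp.sub_apply] using this
    have harith := aux_arith (k:ℝ) (n:ℝ) (sstar:ℝ) α2 β2
      (by exact_mod_cast hk1) (by exact_mod_cast hn1)
      (by
        have : k ≤ sstar := le_trans (Finset.card_le_card (Finset.sdiff_subset)) hsparse
        exact_mod_cast this)
      hα2 hβ2
    calc ∑ i ∈ A, ((u i) ^ 2 - (v i - u i) ^ 2)
        ≤ (k:ℝ) * (β2 / ((n:ℝ) + k))
            + 2 * (Real.sqrt (β2 / ((n:ℝ) + k)) * Real.sqrt ((k:ℝ) * α2)) := by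
          linarith [hterm, hsumv, hcross]
      _ ≤ 2 * Real.sqrt sstar / Real.sqrt n * (α2 + β2) := by
          simpa using harith
      _ ≤ 2 * Real.sqrt sstar / Real.sqrt n * ‖v - u‖ ^ 2 :=
          mul_le_mul_of_nonneg_left hab hr0
  have hgoal : (1 + 2 * Real.sqrt sstar / Real.sqrt n) * ‖v - u‖ ^ 2
      = ‖v - u‖ ^ 2 + 2 * Real.sqrt sstar / Real.sqrt n * ‖v - u‖ ^ 2 := by ring
  rw [show ((s - sstar : ℕ) : ℝ) = (n : ℝ) from rfl, hgoal]
  linarith
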